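/- Let M be a graded multiplication R-module and N a graded s-prime submodule of M for some nonzero homogeneous s. If K and L are graded submodules of M with K ∩ L ⊆ N, then sK ⊆ N or sL ⊆ N. -/

import Mathlib

open DirectSum

variable {G R M : Type*}

/-- A submodule is graded if it contains all homogeneous components of its elements. -/
def IsGradedSubmodule [CommRing R] [AddCommGroup M] [Module R M] [DecidableEq G]
    (ℳ : G → AddSubgroup M) [DirectSum.Decomposition ℳ] (N : Submodule R M) : Prop :=
  ∀ m ∈ N, ∀ g : G, (DirectSum.decompose ℳ m g : M) ∈ N

/-- A graded ideal of a graded ring. -/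
def IsGradedIdeal [CommRing R] [DecidableEq G]
    (𝒜 : G → AddSubgroup R) [DirectSum.Decomposition 𝒜] (P : Ideal R) : Prop :=
  ∀ r ∈ P, ∀ g : G, (DirectSum.decompose 𝒜 r g : R) ∈ P

/-- `N` is a graded `s`-prime submodule: `s ∉ (N :_R M)` and for homogeneous `r`, `m`,
`r • m ∈ N` implies `s * r ∈ (N :_R M)` or `s • m ∈ N`. -/
def IsGradedSPrime [CommRing R] [AddCommGroup M] [Module R M]
    (𝒜 : G → AddSubgroup R) (ℳ : G → AddSubgroup M) (s : R) (N : Submodule R M) : Prop :=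
  s ∉ N.colon ⊤ ∧
  ∀ (r : R) (m : M), SetLike.IsHomogeneousElem 𝒜 r → SetLike.IsHomogeneousElem ℳ m →
    r • m ∈ N → s * r ∈ N.colon ⊤ ∨ s • m ∈ N

/-- `P` is a graded `s`-prime ideal. -/
def IsGradedSPrimeIdeal [CommRing R]
    (𝒜 : G → AddSubgroup R) (s : R) (P : Ideal R) : Prop :=
  s ∉ P ∧
  ∀ a b : R, SetLike.IsHomogeneousElem 𝒜 a → SetLike.IsHomogeneousElem 𝒜 b →
    a * b ∈ P → s * a ∈ P ∨ s * b ∈ P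

/-- `K` is a graded prime submodule. -/
def IsGradedPrime [CommRing R] [AddCommGroup M] [Module R M]
    (𝒜 : G → AddSubgroup R) (ℳ : G → AddSubgroup M) (K : Submodule R M) : Prop :=
  K ≠ ⊤ ∧
  ∀ (r : R) (m : M), SetLike.IsHomogeneousElem 𝒜 r → SetLike.IsHomogeneousElem ℳ m →
    r • m ∈ K → r ∈ K.colon ⊤ ∨ m ∈ K


section Aux
variable [AddGroup G] [DecidableEq G] [CommRing R] [AddCommGroup M] [Module R M]
    (𝒜 : G → AddSubgroup R) (ℳ : G → AddSubgroup M)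
    [GradedRing 𝒜] [DirectSum.Decomposition ℳ] [SetLike.GradedSMul 𝒜 ℳ]

lemma comp_smul (a : R) {m : M} {h : G} (hm : m ∈ ℳ h) (g : G) :
    (DirectSum.decompose ℳ (a • m) (g + h) : M) = (DirectSum.decompose 𝒜 a g : R) • m := by
  classical
  nth_rewrite 1 [← DirectSum.sum_support_decompose 𝒜 a]
  rw [Finset.sum_smul, DirectSum.decompose_sum, DFinsupp.finset_sum_apply,
    AddSubmonoidClass.coe_finset_sum]
  by_cases hg : g ∈ (DirectSum.decompose 𝒜 a).support
  · rw [Finset.sum_eq_single_of_mem g hg]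
    · exact DirectSum.decompose_of_mem_same ℳ
        (SetLike.GradedSMul.smul_mem (DirectSum.decompose 𝒜 a g).2 hm)
    · intro i _ hig
      rw [DirectSum.decompose_of_mem_ne ℳ
        (SetLike.GradedSMul.smul_mem (DirectSum.decompose 𝒜 a i).2 hm)]
      simpa using hig
  · rw [Finset.sum_eq_zero, DFinsupp.notMem_support_iff.mp hg]
    · simp
    · intro i hi
      rw [DirectSum.decompose_of_mem_ne ℳ
        (SetLike.GradedSMul.smul_mem (DirectSum.decompose 𝒜 a i).2 hm)]
      intro hig
      exact hg (by simpa [add_left_injective h hig] using hi)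

lemma graded_mem_of_components {N : Submodule R M} {m : M}
    (hm : ∀ g : G, (DirectSum.decompose ℳ m g : M) ∈ N) : m ∈ N := by
  classical
  rw [← DirectSum.sum_support_decompose ℳ m]
  exact Submodule.sum_mem _ fun g _ => hm g

end Aux

section Main
variable [AddGroup G] [DecidableEq G] [CommRing R] [AddCommGroup M] [Module R M]
    (𝒜 : G → AddSubgroup R) (ℳ : G → AddSubgroup M)
    [GradedRing 𝒜] [DirectSum.Decomposition ℳ] [SetLike.GradedSMul 𝒜 ℳ]

lemma colon_graded {K : Submodule R M}
    (hK : ∀ m ∈ K, ∀ g : G, (DirectSum.decompose ℳ m g : M) ∈ K) {a : R}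
    (ha : a ∈ K.colon ⊤) (g : G) : (DirectSum.decompose 𝒜 a g : R) ∈ K.colon ⊤ := by
  classical
  rw [Submodule.mem_colon]
  intro m _
  nth_rewrite 1 [← DirectSum.sum_support_decompose ℳ m]
  rw [Finset.smul_sum]
  refine Submodule.sum_mem _ fun i _ => ?_
  rw [← comp_smul 𝒜 ℳ a (DirectSum.decompose ℳ m i).2 g]
  exact hK _ (Submodule.mem_colon.mp ha _ trivial) _

lemma exists_hom (N : Submodule R M)
    (K' : Submodule R M)
    (hK' : ∀ m ∈ K', ∀ g : G, (DirectSum.decompose ℳ m g : M) ∈ K')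
    (hmul : K' = K'.colon ⊤ • (⊤ : Submodule R M))
    (s : R) {k : M} (hk : k ∈ K') (hsk : s • k ∉ N) :
    ∃ a : R, SetLike.IsHomogeneousElem 𝒜 a ∧ a ∈ K'.colon ⊤ ∧ s * a ∉ N.colon ⊤ := by
  classical
  by_contra hcon
  push_neg at hcon
  have hall : ∀ a ∈ K'.colon ⊤, s * a ∈ N.colon ⊤ := by
    intro a ha
    nth_rewrite 1 [← DirectSum.sum_support_decompose 𝒜 a]
    rw [Finset.mul_sum]
    exact Submodule.sum_mem _ fun g _ =>
      hcon _ ⟨g, (DirectSum.decompose 𝒜 a g).2⟩ (colon_graded 𝒜 ℳ hK' ha g)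
  apply hsk
  rw [hmul] at hk
  refine Submodule.smul_induction_on hk (fun r hr n _ => ?_) (fun x y hx hy => ?_)
  · rw [smul_smul]
    exact Submodule.mem_colon.mp (hall r hr) n trivial
  · rw [smul_add]; exact Submodule.add_mem _ hx hy

end Main


/-- in a graded multiplication module, if `N` is graded `s`-prime and
`K ∩ L ⊆ N` for graded submodules `K`, `L`, then `sK ⊆ N` or `sL ⊆ N`. -/
theorem stmt_4 [AddGroup G] [DecidableEq G] [CommRing R] [AddCommGroup M] [Module R M]
    (𝒜 : G → AddSubgroup R) (ℳ : G → AddSubgroup M)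
    [GradedRing 𝒜] [DirectSum.Decomposition ℳ] [SetLike.GradedSMul 𝒜 ℳ]
    (hmult : ∀ P : Submodule R M, IsGradedSubmodule ℳ P → P = P.colon ⊤ • (⊤ : Submodule R M))
    (N : Submodule R M) (hN : IsGradedSubmodule ℳ N)
    (s : R) (hs0 : s ≠ 0) (hsh : SetLike.IsHomogeneousElem 𝒜 s)
    (h : IsGradedSPrime 𝒜 ℳ s N)
    (K L : Submodule R M) (hK : IsGradedSubmodule ℳ K) (hL : IsGradedSubmodule ℳ L)
    (hKL : K ⊓ L ≤ N) :
    (∀ k ∈ K, s • k ∈ N) ∨ (∀ l ∈ L, s • l ∈ N) := by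
  classical
  by_contra hcon
  push_neg at hcon
  obtain ⟨⟨k, hk, hsk⟩, ⟨l, hl, hsl⟩⟩ := hcon
  obtain ⟨a, hah, haK, hsa⟩ := exists_hom 𝒜 ℳ N K hK (hmult K hK) s hk hsk
  obtain ⟨b, hbh, hbL, hsb⟩ := exists_hom 𝒜 ℳ N L hL (hmult L hL) s hl hsl
  have hab : ∀ m : M, (a * b) • m ∈ N := fun m => by
    rw [mul_smul]
    exact hKL ⟨Submodule.mem_colon.mp haK _ trivial,
      Submodule.smul_mem L a (Submodule.mem_colon.mp hbL m trivial)⟩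
  apply hsb
  rw [Submodule.mem_colon]
  intro m _
  nth_rewrite 1 [← DirectSum.sum_support_decompose ℳ m]
  rw [Finset.smul_sum]
  refine Submodule.sum_mem _ fun g _ => ?_
  have := h.2 a (b • (DirectSum.decompose ℳ m g : M)) hah
    (SetLike.IsHomogeneousElem.graded_smul hbh ⟨g, (DirectSum.decompose ℳ m g).2⟩)
    (by rw [← mul_smul]; exact hab _)
  rcases this with h1 | h2
  · exact absurd h1 hsa
  · rwa [smul_smul] at h2
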